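/- Let X be a Polish space and φ₂ : X → ℝ a continuous function with φ₂ ≥ 1 such that φ₂^{-1}([0,u]) is compact for every u ≥ 0. Let v be a continuous nonnegative linear functional on C_b(X), and assume there exists K > 0 such that v(ψ) ≤ K for every ψ ∈ C_b(X) with 0 ≤ ψ ≤ φ₂ pointwise. Then there exists a finite nonnegative Borel measure ν on X such that v(f) = ∫_X f dν for every f ∈ C_b(X). -/

import Mathlib

open MeasureTheory BoundedContinuousFunction Set TopologicalSpace
open scoped ENNReal NNReal

lemma sum_min_max_eq (n : ℕ) (t : ℝ) (ht : 0 ≤ t) :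
    ∑ k ∈ Finset.range n, min (max (t - k) 0) 1 = min t n := by
  induction n with
  | zero => simp [min_eq_right ht]
  | succ n ih =>
    rw [Finset.sum_range_succ, ih]
    push_cast
    rcases le_total t n with h | h
    · rw [min_eq_left h, max_eq_right (by linarith), min_eq_left zero_le_one,
        min_eq_left (by linarith)]
      ring
    · rw [min_eq_right h, max_eq_left (by linarith)]
      rcases le_total (t - n) 1 with h2 | h2
      · rw [min_eq_left h2, min_eq_left (by linarith)]; ring
      · rw [min_eq_right h2, min_eq_right (by linarith)]

lemma le_of_forall_nat_mul_le {a b c : ℝ} (hc : 0 ≤ c)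
    (h : ∀ n : ℕ, (n : ℝ) * a ≤ c + n * b) : a ≤ b := by
  by_contra hab
  push_neg at hab
  obtain ⟨n, hn⟩ := exists_nat_gt (c / (a - b))
  have hpos : 0 < a - b := by linarith
  have h1 := (div_lt_iff₀ hpos).mp hn
  have h2 := h n
  nlinarith

lemma sum_shift_le {g : ℕ → ℝ} (hg : ∀ k, 0 ≤ g k) (m : ℕ) :
    ∑ k ∈ Finset.range m, g k ≤ g 0 + ∑ k ∈ Finset.range m, g (k + 1) := by
  cases m with
  | zero => simpa using hg 0
  | succ m =>
    rw [Finset.sum_range_succ' g m]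
    have : ∑ k ∈ Finset.range m, g (k + 1) ≤ ∑ k ∈ Finset.range (m + 1), g (k + 1) :=
      Finset.sum_le_sum_of_subset_of_nonneg
        (Finset.range_subset_range.2 (Nat.le_succ m)) (fun i _ _ => hg _)
    linarith


set_option maxHeartbeats 2000000 in
/-- Lemma 4.1 of the paper: on a Polish space `X`, a continuous nonnegative linear
functional `v` on `C_b(X)` which is uniformly bounded on the test functions
`0 ≤ ψ ≤ φ₂` — where `φ₂ ≥ 1` is continuous with compact sublevel sets — is
represented by a finite nonnegative Borel measure. -/
theorem functional_represented_by_measure {X : Type*} [TopologicalSpace X]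
    [PolishSpace X] [MeasurableSpace X] [BorelSpace X]
    (φ₂ : X → ℝ) (hφcont : Continuous φ₂) (hφge : ∀ x, 1 ≤ φ₂ x)
    (hφcomp : ∀ u : ℝ, 0 ≤ u → IsCompact (φ₂ ⁻¹' Set.Icc 0 u))
    (v : (X →ᵇ ℝ) →L[ℝ] ℝ)
    (hvpos : ∀ f : X →ᵇ ℝ, (∀ x, 0 ≤ f x) → 0 ≤ v f)
    (K : ℝ) (hK : 0 < K)
    (hbound : ∀ ψ : X →ᵇ ℝ, (∀ x, 0 ≤ ψ x) → (∀ x, ψ x ≤ φ₂ x) → v ψ ≤ K) :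
    ∃ ν : Measure X, IsFiniteMeasure ν ∧ ∀ f : X →ᵇ ℝ, v f = ∫ x, f x ∂ν := by
  classical
  haveI : NormalSpace X := by letI := upgradeIsCompletelyMetrizable X; infer_instance
  -- test functions and their set of values
  set T : Set X → Set (X →ᵇ ℝ) :=
    fun A => {f | (∀ x, 0 ≤ f x) ∧ ∀ x ∈ A, 1 ≤ f x} with hTdef
  set S : Set X → Set ℝ := fun A => (fun f => v f) '' T A with hSdef
  have hone : ∀ A : Set X, (1 : X →ᵇ ℝ) ∈ T A := by
    intro A
    constructor
    · intro x; simp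
    · intro x _; simp
  have hne : ∀ A : Set X, (S A).Nonempty := fun A => ⟨v 1, 1, hone A, rfl⟩
  have hbb : ∀ A : Set X, BddBelow (S A) := by
    rintro A
    refine ⟨0, ?_⟩
    rintro r ⟨f, hf, rfl⟩
    exact hvpos f hf.1
  have hSnonneg : ∀ A : Set X, 0 ≤ sInf (S A) := fun A =>
    le_csInf (hne A) (by rintro r ⟨f, hf, rfl⟩; exact hvpos f hf.1)
  have hinfle : ∀ (A : Set X) (f : X →ᵇ ℝ), f ∈ T A → sInf (S A) ≤ v f :=
    fun A f hf => csInf_le (hbb A) ⟨f, hf, rfl⟩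
  -- monotonicity
  have hmono : ∀ (A B : Set X), A ⊆ B → sInf (S A) ≤ sInf (S B) := by
    intro A B h
    refine csInf_le_csInf (hbb A) (hne B) (Set.image_mono ?_)
    rintro f ⟨hf0, hf1⟩
    exact ⟨hf0, fun x hx => hf1 x (h hx)⟩
  -- subadditivity
  have hsuple : ∀ (A B : Set X), sInf (S (A ∪ B)) ≤ sInf (S A) + sInf (S B) := by
    intro A B
    refine le_of_forall_pos_le_add fun ε hε => ?_
    obtain ⟨r₁, hr₁mem, hr₁⟩ := Real.lt_sInf_add_pos (hne A) (half_pos hε)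
    obtain ⟨r₂, hr₂mem, hr₂⟩ := Real.lt_sInf_add_pos (hne B) (half_pos hε)
    obtain ⟨f₁, hf₁, rfl⟩ := hr₁mem
    obtain ⟨f₂, hf₂, rfl⟩ := hr₂mem
    have hmem : f₁ + f₂ ∈ T (A ∪ B) := by
      constructor
      · intro x
        simpa using add_nonneg (hf₁.1 x) (hf₂.1 x)
      · rintro x (hx | hx)
        · have := hf₁.2 x hx
          have h2 := hf₂.1 x
          simp only [BoundedContinuousFunction.coe_add, Pi.add_apply]
          linarith
        · have := hf₂.2 x hx
          have h2 := hf₁.1 x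
          simp only [BoundedContinuousFunction.coe_add, Pi.add_apply]
          linarith
    have := hinfle _ _ hmem
    rw [map_add] at this
    linarith
  -- additivity on disjoint closed sets
  have hdisj : ∀ (A B : Set X), Disjoint A B → IsClosed A → IsClosed B →
      sInf (S A) + sInf (S B) ≤ sInf (S (A ∪ B)) := by
    intro A B hd hA hB
    refine le_csInf (hne _) ?_
    rintro r ⟨f, hf, rfl⟩
    obtain ⟨χ, hχ0, hχ1, hχ01⟩ := exists_continuous_zero_one_of_isClosed hA hB hd
    set χb : X →ᵇ ℝ := BoundedContinuousFunction.ofNormedAddCommGroup χ χ.continuous 1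
      (fun x => by
        rw [Real.norm_eq_abs, abs_le]
        exact ⟨by linarith [(hχ01 x).1], (hχ01 x).2⟩) with hχb
    have hχbapp : ∀ x, χb x = χ x := fun x => rfl
    have hm1 : f * ((1 : X →ᵇ ℝ) - χb) ∈ T A := by
      constructor
      · intro x
        have := (hχ01 x).2
        have := hf.1 x
        simp only [BoundedContinuousFunction.coe_mul, BoundedContinuousFunction.coe_sub,
          BoundedContinuousFunction.coe_one, Pi.mul_apply, Pi.sub_apply, Pi.one_apply, hχbapp]
        nlinarith
      · intro x hx
        have h0 : χ x = 0 := hχ0 hx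
        have h1 := hf.2 x (Set.mem_union_left _ hx)
        simp only [BoundedContinuousFunction.coe_mul, BoundedContinuousFunction.coe_sub,
          BoundedContinuousFunction.coe_one, Pi.mul_apply, Pi.sub_apply, Pi.one_apply, hχbapp, h0]
        linarith
    have hm2 : f * χb ∈ T B := by
      constructor
      · intro x
        have := (hχ01 x).1
        have := hf.1 x
        simp only [BoundedContinuousFunction.coe_mul, Pi.mul_apply, hχbapp]
        nlinarith
      · intro x hx
        have h0 : χ x = 1 := hχ1 hx
        have h1 := hf.2 x (Set.mem_union_right _ hx)
        simp only [BoundedContinuousFunction.coe_mul, Pi.mul_apply, hχbapp, h0]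
        linarith
    have hsum : f * ((1 : X →ᵇ ℝ) - χb) + f * χb = f := by
      ext x
      simp only [BoundedContinuousFunction.coe_add, BoundedContinuousFunction.coe_mul,
        BoundedContinuousFunction.coe_sub, BoundedContinuousFunction.coe_one,
        Pi.add_apply, Pi.mul_apply, Pi.sub_apply, Pi.one_apply]
      ring
    have h1 := hinfle _ _ hm1
    have h2 := hinfle _ _ hm2
    have : v (f * ((1 : X →ᵇ ℝ) - χb)) + v (f * χb) = v f := by
      rw [← map_add, hsum]
    linarith
  -- the content
  set μc : Content X :=
    { toFun := fun A => Real.toNNReal (sInf (S A)),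
      mono' := fun K₁ K₂ h => Real.toNNReal_mono (hmono _ _ h),
      sup_disjoint' := by
        intro K₁ K₂ hd h₁ h₂
        have hle := hsuple (K₁ : Set X) K₂
        have hge := hdisj (K₁ : Set X) K₂ hd h₁ h₂
        have hcoe : ((K₁ ⊔ K₂ : Compacts X) : Set X) = (K₁ : Set X) ∪ K₂ := rfl
        have heq : sInf (S ((K₁ ⊔ K₂ : Compacts X) : Set X)) = sInf (S K₁) + sInf (S K₂) := by
          rw [hcoe]; exact le_antisymm hle hge
        show Real.toNNReal (sInf (S ((K₁ ⊔ K₂ : Compacts X) : Set X)))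
            = Real.toNNReal (sInf (S (K₁ : Set X))) + Real.toNNReal (sInf (S (K₂ : Set X)))
        rw [heq, Real.toNNReal_add (hSnonneg _) (hSnonneg _)]
      sup_le' := by
        intro K₁ K₂
        have hle := hsuple (K₁ : Set X) K₂
        have hcoe : ((K₁ ⊔ K₂ : Compacts X) : Set X) = (K₁ : Set X) ∪ K₂ := rfl
        calc Real.toNNReal (sInf (S ((K₁ ⊔ K₂ : Compacts X) : Set X)))
            ≤ Real.toNNReal (sInf (S K₁) + sInf (S K₂)) := by
              rw [hcoe]; exact Real.toNNReal_mono hle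
          _ ≤ _ := Real.toNNReal_add_le } with hμc
  set ν : Measure X := μc.measure with hν
  have hνopen : ∀ (U : Set X) (hU : IsOpen U), ν U = μc.innerContent ⟨U, hU⟩ := by
    intro U hU
    rw [hν, μc.measure_apply hU.measurableSet, μc.outerMeasure_of_isOpen U hU]
  -- L2 : upper bound on ν of open sets
  have hL2 : ∀ (U : Set X) (hU : IsOpen U) (g : X →ᵇ ℝ), (∀ x, 0 ≤ g x) →
      (∀ x ∈ U, 1 ≤ g x) → ν U ≤ ENNReal.ofReal (v g) := by
    intro U hU g hg0 hg1
    rw [hνopen U hU]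
    refine iSup₂_le fun Kc hKc => ?_
    have hgT : g ∈ T Kc := ⟨hg0, fun x hx => hg1 x (hKc hx)⟩
    have h1 : sInf (S Kc) ≤ v g := hinfle _ _ hgT
    show ((Real.toNNReal (sInf (S (Kc : Set X))) : ℝ≥0) : ℝ≥0∞) ≤ ENNReal.ofReal (v g)
    rw [ENNReal.ofReal]
    exact_mod_cast Real.toNNReal_mono h1
  -- compact lower bounds
  have hLK : ∀ (C : Set X) (hC : IsCompact C) (U : Set X) (hU : IsOpen U), C ⊆ U →
      ENNReal.ofReal (sInf (S C)) ≤ ν U := by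
    intro C hC U hU hCU
    rw [hνopen U hU]
    exact μc.le_innerContent ⟨C, hC⟩ ⟨U, hU⟩ hCU
  -- finiteness
  have hνuniv : ν Set.univ ≤ ENNReal.ofReal (v 1) := by
    refine hL2 Set.univ isOpen_univ 1 ?_ ?_
    · intro x; simp
    · intro x _; simp
  haveI hfin : IsFiniteMeasure ν :=
    ⟨lt_of_le_of_lt hνuniv ENNReal.ofReal_lt_top⟩
  have hv1 : 0 ≤ v 1 := hvpos 1 (fun x => by simp)
  -- L4 : functionals vanishing outside an open set are dominated by its measure
  have hL4 : ∀ (U : Set X) (hU : IsOpen U) (g : X →ᵇ ℝ), (∀ x, 0 ≤ g x) →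
      (∀ x, g x ≤ 1) → (∀ x, x ∉ U → g x = 0) → v g ≤ (ν U).toReal := by
    intro U hU g hg0 hg1 hgU
    refine le_of_forall_pos_le_add fun δ hδ => ?_
    set ε : ℝ := δ / (2 * (v 1 + 1)) with hε
    have hεpos : 0 < ε := by positivity
    have hεv1 : ε * v 1 ≤ δ / 2 := by
      rw [hε, div_mul_eq_mul_div, div_le_div_iff₀ (by positivity) (by norm_num)]
      nlinarith
    set u : ℝ := max 1 (2 * K / δ) with hu
    have hu1 : (1 : ℝ) ≤ u := le_max_left _ _
    have hupos : (0 : ℝ) < u := lt_of_lt_of_le one_pos hu1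
    have hKu : K / u ≤ δ / 2 := by
      have h2 : 2 * K / δ ≤ u := le_max_right _ _
      rw [div_le_div_iff₀ hupos (by norm_num)]
      have : (2 * K / δ) * δ = 2 * K := by field_simp
      nlinarith [mul_le_mul_of_nonneg_right h2 hδ.le]
    -- the cutoff function w
    set w : X →ᵇ ℝ := BoundedContinuousFunction.ofNormedAddCommGroup
      (fun x => min (φ₂ x / u) 1) (Continuous.min (hφcont.div_const u) continuous_const) 1
      (fun x => by
        rw [Real.norm_eq_abs, abs_le]
        constructor
        · have h1 : (0:ℝ) ≤ min (φ₂ x / u) 1 :=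
            le_min (div_nonneg (by linarith [hφge x]) hupos.le) zero_le_one
          linarith
        · exact min_le_right _ _) with hw
    have hwapp : ∀ x, w x = min (φ₂ x / u) 1 := fun x => rfl
    have hw0 : ∀ x, 0 ≤ w x := fun x =>
      le_min (div_nonneg (by linarith [hφge x]) hupos.le) zero_le_one
    have hwv : v w ≤ K / u := by
      have hψ0 : ∀ x, 0 ≤ (u • w) x := by
        intro x
        have := hw0 x
        simp only [BoundedContinuousFunction.coe_smul, Pi.smul_apply, smul_eq_mul]
        nlinarith
      have hψφ : ∀ x, (u • w) x ≤ φ₂ x := by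
        intro x
        simp only [BoundedContinuousFunction.coe_smul, Pi.smul_apply, smul_eq_mul, hwapp]
        have h1 : min (φ₂ x / u) 1 ≤ φ₂ x / u := min_le_left _ _
        calc u * min (φ₂ x / u) 1 ≤ u * (φ₂ x / u) :=
              mul_le_mul_of_nonneg_left h1 hupos.le
          _ = φ₂ x := by field_simp
      have := hbound (u • w) hψ0 hψφ
      rw [ContinuousLinearMap.map_smul, smul_eq_mul] at this
      rw [le_div_iff₀ hupos]
      linarith [this]
    -- the compact set C
    set C : Set X := φ₂ ⁻¹' Set.Icc 0 u ∩ {x | ε ≤ g x} with hC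
    have hCcomp : IsCompact C :=
      (hφcomp u (by linarith)).inter_right (isClosed_le continuous_const g.continuous)
    have hCU : C ⊆ U := by
      intro x hx
      by_contra hxU
      have := hgU x hxU
      have := hx.2
      simp only [Set.mem_setOf_eq] at this
      linarith
    -- the key estimate
    have hkey : ∀ f : X →ᵇ ℝ, f ∈ T C → v g ≤ v f + ε * v 1 + K / u := by
      intro f hf
      have hpt : ∀ x, g x ≤ (f + ε • 1 + w) x := by
        intro x
        have happ : (f + ε • 1 + w) x = f x + ε * 1 + w x := by
          simp [BoundedContinuousFunction.coe_add, BoundedContinuousFunction.coe_smul]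
        rw [happ]
        by_cases hx : x ∈ C
        · have h1 := hf.2 x hx
          have h2 := hg1 x
          have h3 := hw0 x
          linarith
        · have hf0 := hf.1 x
          have h3 := hw0 x
          by_cases hgε : g x < ε
          · linarith
          · push_neg at hgε
            have hφx : ¬ (φ₂ x ≤ u) := by
              intro hle
              exact hx ⟨⟨by linarith [hφge x], hle⟩, hgε⟩
            push_neg at hφx
            have hw1 : w x = 1 := by
              rw [hwapp]
              refine min_eq_right ?_
              rw [le_div_iff₀ hupos]
              linarith
            have := hg1 x
            linarith
      have hposd := hvpos (f + ε • 1 + w - g) (fun x => by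
        have := hpt x
        simp only [BoundedContinuousFunction.coe_sub, Pi.sub_apply]
        linarith)
      rw [map_sub, map_add, map_add, ContinuousLinearMap.map_smul, smul_eq_mul] at hposd
      have := hwv
      linarith
    have hinfC : v g - ε * v 1 - K / u ≤ sInf (S C) := by
      refine le_csInf (hne C) ?_
      rintro r ⟨f, hf, rfl⟩
      linarith [hkey f hf]
    have hCν : ENNReal.ofReal (sInf (S C)) ≤ ν U := hLK C hCcomp U hU hCU
    have hνUfin : ν U ≠ ⊤ := measure_ne_top ν U
    have hinfν : sInf (S C) ≤ (ν U).toReal :=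
      (ENNReal.ofReal_le_iff_le_toReal hνUfin).mp hCν
    have := hinfC.trans hinfν
    linarith
  -- representation for functions with values in [0,1]
  have main01 : ∀ f : X →ᵇ ℝ, (∀ x, 0 ≤ f x) → (∀ x, f x ≤ 1) → v f = ∫ x, f x ∂ν := by
    intro f hf0 hf1
    have hint : Integrable (fun x => f x) ν := f.integrable ν
    set c : ℝ := (ν Set.univ).toReal with hcdef
    have hc0 : 0 ≤ c := ENNReal.toReal_nonneg
    have key : ∀ n : ℕ, ((n : ℝ) * v f ≤ c + n * ∫ x, f x ∂ν) ∧
        ((n : ℝ) * ∫ x, f x ∂ν ≤ 2 * c + n * v f) := by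
      intro n
      rcases Nat.eq_zero_or_pos n with rfl | hn
      · simp only [Nat.cast_zero, zero_mul, add_zero]
        exact ⟨hc0, by linarith⟩
      obtain ⟨m, rfl⟩ : ∃ m, n = m + 1 := ⟨n - 1, (Nat.succ_pred_eq_of_pos hn).symm⟩
      set n : ℕ := m + 1 with hndef
      have hnR : (0 : ℝ) < n := by positivity
      -- the truncation functions
      set F : ℕ → (X →ᵇ ℝ) := fun k =>
        ((((n : ℝ)) • f - BoundedContinuousFunction.const X (k : ℝ)) ⊔ 0) ⊓ 1 with hFdef
      have hFapp : ∀ k x, F k x = min (max ((n : ℝ) * f x - k) 0) 1 := fun k x => rfl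
      have hF0 : ∀ k x, 0 ≤ F k x := by
        intro k x
        rw [hFapp]
        exact le_min (le_max_right _ _) zero_le_one
      have hF1 : ∀ k x, F k x ≤ 1 := by
        intro k x
        rw [hFapp]
        exact min_le_right _ _
      have hvF0 : ∀ k, 0 ≤ v (F k) := fun k => hvpos _ (hF0 k)
      have hsumapp : ∀ x, (∑ k ∈ Finset.range n, F k) x = ∑ k ∈ Finset.range n, F k x := by
        intro x; simp
      have hsumx : ∀ x, ∑ k ∈ Finset.range n, F k x = (n : ℝ) * f x := by
        intro x
        have h1 : ∀ k, F k x = min (max ((n : ℝ) * f x - k) 0) 1 := fun k => hFapp k x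
        simp_rw [h1]
        rw [sum_min_max_eq n ((n : ℝ) * f x) (mul_nonneg hnR.le (hf0 x))]
        exact min_eq_left (by nlinarith [hf1 x, hf0 x])
      have hsum : (∑ k ∈ Finset.range n, F k) = (n : ℝ) • f := by
        ext x
        rw [hsumapp x, hsumx x]
        simp
      have hvF : (n : ℝ) * v f = ∑ k ∈ Finset.range n, v (F k) := by
        rw [← smul_eq_mul, ← ContinuousLinearMap.map_smul, ← hsum, map_sum]
      -- open and closed level sets
      set V : ℕ → Set X := fun k => {x | (k : ℝ) / n < f x} with hVdef
      have hVopen : ∀ k, IsOpen (V k) := fun k => isOpen_lt continuous_const f.continuous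
      set W : ℕ → Set X := fun k => {x | (k : ℝ) / n ≤ f x} with hWdef
      have hWmeas : ∀ k, MeasurableSet (W k) :=
        fun k => (isClosed_le continuous_const f.continuous).measurableSet
      have hFV : ∀ k x, x ∉ V k → F k x = 0 := by
        intro k x hx
        simp only [hVdef, Set.mem_setOf_eq, not_lt] at hx
        have h1 : (n : ℝ) * f x - k ≤ 0 := by
          have h2 : f x * n ≤ k := (le_div_iff₀ hnR).mp hx
          nlinarith
        rw [hFapp, max_eq_right h1, min_eq_left zero_le_one]
      have hFone : ∀ k x, x ∈ V (k + 1) → F k x = 1 := by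
        intro k x hx
        simp only [hVdef, Set.mem_setOf_eq] at hx
        have h1 : (1 : ℝ) ≤ (n : ℝ) * f x - k := by
          have h2 : ((k : ℝ) + 1) < (n : ℝ) * f x := by
            have := (div_lt_iff₀ hnR).mp hx
            push_cast at this ⊢
            nlinarith
          linarith
        rw [hFapp, min_eq_right (le_trans h1 (le_max_left _ _))]
      have hvFle : ∀ k, v (F k) ≤ (ν (V k)).toReal :=
        fun k => hL4 (V k) (hVopen k) (F k) (hF0 k) (hF1 k) (hFV k)
      -- indicators
      have hIind : ∀ (A : Set X), MeasurableSet A →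
          Integrable (fun x => Set.indicator A (fun _ => (1 : ℝ)) x) ν :=
        fun A hA => (integrable_const (1 : ℝ)).indicator hA
      have hIint : ∀ (A : Set X) (hA : MeasurableSet A),
          ∫ x, Set.indicator A (fun _ => (1 : ℝ)) x ∂ν = (ν A).toReal := by
        intro A hA
        rw [integral_indicator_const (1 : ℝ) hA, smul_eq_mul, mul_one]
        rfl
      have hindF : ∀ k x, Set.indicator (V (k + 1)) (fun _ => (1 : ℝ)) x ≤ F k x := by
        intro k x
        by_cases hx : x ∈ V (k + 1)
        · rw [Set.indicator_of_mem hx, hFone k x hx]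
        · rw [Set.indicator_of_notMem hx]
          exact hF0 k x
      have hFW : ∀ k x, F (k + 1) x ≤ Set.indicator (W (k + 1)) (fun _ => (1 : ℝ)) x := by
        intro k x
        by_cases hx : x ∈ W (k + 1)
        · rw [Set.indicator_of_mem hx]
          exact hF1 _ x
        · rw [Set.indicator_of_notMem hx]
          simp only [hWdef, Set.mem_setOf_eq, not_le] at hx
          have h1 : (n : ℝ) * f x - ((k : ℕ) + 1 : ℕ) ≤ 0 := by
            have := (lt_div_iff₀ hnR).mp hx
            push_cast at this ⊢
            nlinarith
          rw [hFapp, max_eq_right h1, min_eq_left zero_le_one]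
      constructor
      · -- Chain I : n * v f ≤ c + n * ∫ f
        have step1 : (n : ℝ) * v f ≤ ∑ k ∈ Finset.range n, (ν (V k)).toReal := by
          rw [hvF]
          exact Finset.sum_le_sum fun k _ => hvFle k
        have step2 : ∑ k ∈ Finset.range n, (ν (V k)).toReal
            = (∑ k ∈ Finset.range m, (ν (V (k + 1))).toReal) + (ν (V 0)).toReal :=
          Finset.sum_range_succ' _ m
        have step3 : (ν (V 0)).toReal ≤ c :=
          ENNReal.toReal_mono (measure_ne_top ν _) (measure_mono (Set.subset_univ _))
        have step4 : ∑ k ∈ Finset.range m, (ν (V (k + 1))).toReal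
            = ∫ x, (∑ k ∈ Finset.range m, Set.indicator (V (k + 1)) (fun _ => (1 : ℝ)) x) ∂ν := by
          rw [integral_finset_sum _ fun k _ => hIind _ (hVopen (k + 1)).measurableSet]
          exact Finset.sum_congr rfl fun k _ => (hIint _ (hVopen (k + 1)).measurableSet).symm
        have step5 : ∫ x, (∑ k ∈ Finset.range m, Set.indicator (V (k + 1)) (fun _ => (1 : ℝ)) x) ∂ν
            ≤ ∫ x, (n : ℝ) * f x ∂ν := by
          refine integral_mono
            (integrable_finset_sum _ fun k _ => hIind _ (hVopen (k + 1)).measurableSet)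
            (hint.const_mul _) fun x => ?_
          have h1 : ∑ k ∈ Finset.range m, Set.indicator (V (k + 1)) (fun _ => (1 : ℝ)) x
              ≤ ∑ k ∈ Finset.range m, F k x := Finset.sum_le_sum fun k _ => hindF k x
          have h2 : ∑ k ∈ Finset.range m, F k x ≤ ∑ k ∈ Finset.range n, F k x := by
            rw [hndef, Finset.sum_range_succ]
            linarith [hF0 m x]
          calc ∑ k ∈ Finset.range m, Set.indicator (V (k + 1)) (fun _ => (1 : ℝ)) x
              ≤ ∑ k ∈ Finset.range n, F k x := le_trans h1 h2
            _ = (n : ℝ) * f x := hsumx x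
        have step6 : ∫ x, (n : ℝ) * f x ∂ν = (n : ℝ) * ∫ x, f x ∂ν :=
          integral_const_mul _ _
        calc (n : ℝ) * v f ≤ ∑ k ∈ Finset.range n, (ν (V k)).toReal := step1
          _ = (∑ k ∈ Finset.range m, (ν (V (k + 1))).toReal) + (ν (V 0)).toReal := step2
          _ ≤ (∑ k ∈ Finset.range m, (ν (V (k + 1))).toReal) + c := by linarith
          _ ≤ (n : ℝ) * ∫ x, f x ∂ν + c := by
              rw [step4]
              have := step5.trans (le_of_eq step6)
              linarith
          _ = c + (n : ℝ) * ∫ x, f x ∂ν := by ring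
      · -- Chain II : n * ∫ f ≤ 2c + n * v f
        have hpt : ∀ x, (n : ℝ) * f x
            ≤ 1 + ∑ k ∈ Finset.range m, Set.indicator (W (k + 1)) (fun _ => (1 : ℝ)) x := by
          intro x
          have h1 : (n : ℝ) * f x = (∑ k ∈ Finset.range m, F (k + 1) x) + F 0 x := by
            rw [← hsumx x, hndef]
            exact Finset.sum_range_succ' _ m
          have h2 : ∑ k ∈ Finset.range m, F (k + 1) x
              ≤ ∑ k ∈ Finset.range m, Set.indicator (W (k + 1)) (fun _ => (1 : ℝ)) x :=
            Finset.sum_le_sum fun k _ => hFW k x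
          have h3 := hF1 0 x
          linarith
        have step1 : (n : ℝ) * ∫ x, f x ∂ν
            ≤ c + ∑ k ∈ Finset.range m, (ν (W (k + 1))).toReal := by
          have hI2 : Integrable (fun x => (1 : ℝ)
              + ∑ k ∈ Finset.range m, Set.indicator (W (k + 1)) (fun _ => (1 : ℝ)) x) ν :=
            (integrable_const _).add
              (integrable_finset_sum _ fun k _ => hIind _ (hWmeas (k + 1)))
          have h4 : ∫ x, (n : ℝ) * f x ∂ν ≤ ∫ x, ((1 : ℝ)
              + ∑ k ∈ Finset.range m, Set.indicator (W (k + 1)) (fun _ => (1 : ℝ)) x) ∂ν :=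
            integral_mono (hint.const_mul _) hI2 fun x => hpt x
          rw [integral_const_mul] at h4
          have h5 : ∫ x, ((1 : ℝ)
              + ∑ k ∈ Finset.range m, Set.indicator (W (k + 1)) (fun _ => (1 : ℝ)) x) ∂ν
              = c + ∑ k ∈ Finset.range m, (ν (W (k + 1))).toReal := by
            rw [integral_add (integrable_const _)
              (integrable_finset_sum _ fun k _ => hIind _ (hWmeas (k + 1))),
              integral_const, integral_finset_sum _ fun k _ => hIind _ (hWmeas (k + 1))]
            simp only [smul_eq_mul, mul_one]
            congr 1
            exact Finset.sum_congr rfl fun k _ => hIint _ (hWmeas (k + 1))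
          linarith
        have hWV : ∀ k : ℕ, W (k + 1) ⊆ V k := by
          intro k x hx
          simp only [hWdef, Set.mem_setOf_eq] at hx
          simp only [hVdef, Set.mem_setOf_eq]
          refine lt_of_lt_of_le ?_ hx
          rw [div_lt_div_iff₀ hnR hnR]
          push_cast
          nlinarith
        have step2 : ∀ k : ℕ, (ν (W (k + 1))).toReal ≤ (ν (V k)).toReal :=
          fun k => ENNReal.toReal_mono (measure_ne_top ν _) (measure_mono (hWV k))
        have step3 : ∀ k : ℕ, (ν (V (k + 1))).toReal ≤ v (F k) := by
          intro k
          have h1 : ν (V (k + 1)) ≤ ENNReal.ofReal (v (F k)) :=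
            hL2 (V (k + 1)) (hVopen (k + 1)) (F k) (hF0 k)
              (fun x hx => le_of_eq (hFone k x hx).symm)
          exact ENNReal.toReal_le_of_le_ofReal (hvF0 k) h1
        have step4 : ∑ k ∈ Finset.range m, (ν (V k)).toReal
            ≤ (ν (V 0)).toReal + ∑ k ∈ Finset.range m, (ν (V (k + 1))).toReal :=
          sum_shift_le (fun k => ENNReal.toReal_nonneg) m
        have step5 : (ν (V 0)).toReal ≤ c :=
          ENNReal.toReal_mono (measure_ne_top ν _) (measure_mono (Set.subset_univ _))
        have step6 : ∑ k ∈ Finset.range m, (ν (V (k + 1))).toReal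
            ≤ ∑ k ∈ Finset.range m, v (F k) := Finset.sum_le_sum fun k _ => step3 k
        have step7 : ∑ k ∈ Finset.range m, v (F k) ≤ ∑ k ∈ Finset.range n, v (F k) := by
          rw [hndef, Finset.sum_range_succ]
          linarith [hvF0 m]
        have step8 : ∑ k ∈ Finset.range m, (ν (W (k + 1))).toReal
            ≤ ∑ k ∈ Finset.range m, (ν (V k)).toReal := Finset.sum_le_sum fun k _ => step2 k
        have := hvF
        linarith
    have h1 : v f ≤ ∫ x, f x ∂ν :=
      le_of_forall_nat_mul_le hc0 fun n => (key n).1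
    have h2 : ∫ x, f x ∂ν ≤ v f :=
      le_of_forall_nat_mul_le (by linarith : (0:ℝ) ≤ 2 * c) fun n => (key n).2
    linarith
  -- representation for nonnegative functions
  have mainNonneg : ∀ g : X →ᵇ ℝ, (∀ x, 0 ≤ g x) → v g = ∫ x, g x ∂ν := by
    intro g hg
    have hcpos : (0 : ℝ) < ‖g‖ + 1 := by positivity
    set h : X →ᵇ ℝ := (‖g‖ + 1)⁻¹ • g with hhdef
    have happ : ∀ x, h x = (‖g‖ + 1)⁻¹ * g x := fun x => rfl
    have h0 : ∀ x, 0 ≤ h x := fun x => by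
      rw [happ]; exact mul_nonneg (inv_nonneg.2 hcpos.le) (hg x)
    have h1 : ∀ x, h x ≤ 1 := by
      intro x
      rw [happ, inv_mul_le_iff₀ hcpos, mul_one]
      have h2 := g.norm_coe_le_norm x
      rw [Real.norm_eq_abs] at h2
      have := le_abs_self (g x)
      linarith
    have hrep := main01 h h0 h1
    have hgh : g = (‖g‖ + 1) • h := by
      rw [hhdef, smul_smul, mul_inv_cancel₀ hcpos.ne', one_smul]
    have hv : v g = (‖g‖ + 1) * v h := by
      conv_lhs => rw [hgh]
      rw [ContinuousLinearMap.map_smul, smul_eq_mul]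
    have hi : (‖g‖ + 1) * ∫ x, h x ∂ν = ∫ x, g x ∂ν := by
      rw [← integral_const_mul]
      refine integral_congr_ae (Filter.Eventually.of_forall fun x => ?_)
      show (‖g‖ + 1) * h x = g x
      rw [happ x, ← mul_assoc, mul_inv_cancel₀ hcpos.ne', one_mul]
    rw [hv, hrep, hi]
  -- conclusion
  refine ⟨ν, hfin, fun f => ?_⟩
  have hp := mainNonneg (f ⊔ 0) (fun x => le_max_right _ _)
  have hq := mainNonneg ((-f) ⊔ 0) (fun x => le_max_right _ _)
  have hfd : f = (f ⊔ 0) - ((-f) ⊔ 0) := by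
    ext x
    simp only [BoundedContinuousFunction.coe_sub, Pi.sub_apply]
    exact (max_zero_sub_max_neg_zero_eq_self (f x)).symm
  have hvs : v f = v (f ⊔ 0) - v ((-f) ⊔ 0) := by
    nth_rewrite 1 [hfd]
    exact map_sub v _ _
  have hIsub : ∫ x, ((f ⊔ 0) x - ((-f) ⊔ 0) x) ∂ν
      = (∫ x, (f ⊔ 0) x ∂ν) - ∫ x, ((-f) ⊔ 0) x ∂ν :=
    integral_sub ((f ⊔ 0).integrable ν) (((-f) ⊔ 0).integrable ν)
  have hieq : ∫ x, f x ∂ν = (∫ x, (f ⊔ 0) x ∂ν) - ∫ x, ((-f) ⊔ 0) x ∂ν := by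
    rw [← hIsub]
    refine integral_congr_ae (Filter.Eventually.of_forall fun x => ?_)
    have := max_zero_sub_max_neg_zero_eq_self (f x)
    show f x = max (f x) 0 - max ((-f) x) 0
    simp only [BoundedContinuousFunction.coe_neg, Pi.neg_apply]
    linarith
  rw [hvs, hp, hq, hieq]
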